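/- arXiv:2510.11061 — 2 statements merged into one kernel-verified Lean document; each statement's English description precedes it below -/
import Mathlib

section
/- For every nonempty roughly shift-invariant discrete set A ⊆ ℝ^d there exists a density D > 0 such that #(A ∩ B(x,T)) / m_d(B(x,T)) → D as T → ∞, uniformly with respect to x ∈ ℝ^d, where B(x,T) is the Euclidean ball of radius T centered at x and m_d is Lebesgue measure. -/
open Set MeasureTheory

noncomputable section

/-- `A ⊆ ℝ^d` (Euclidean) is discrete: finite intersection with any ball. -/
def IsDiscreteSet {d : ℕ} (A : Set (EuclideanSpace ℝ (Fin d))) : Prop :=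
  ∀ (x : EuclideanSpace ℝ (Fin d)) (r : ℝ), (A ∩ Metric.ball x r).Finite

/-- `A` is roughly shift-invariant with constant `L` (Euclidean norm). -/
def RSI {d : ℕ} (A : Set (EuclideanSpace ℝ (Fin d))) (L : ℝ) : Prop :=
  ∀ x : EuclideanSpace ℝ (Fin d), ∃ σ : A ≃ A,
    ∀ a : A, ‖(a : EuclideanSpace ℝ (Fin d)) + x - (σ a : EuclideanSpace ℝ (Fin d))‖ < L

namespace Stmt6Aux

open Metric ENNReal Filter

variable {d : ℕ} {A : Set (EuclideanSpace ℝ (Fin d))} {L : ℝ}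

/-- Translation comparison: shifting the center costs at most `L` in the radius. -/
lemma count_le (hdisc : IsDiscreteSet A) (hA : RSI A L)
    (x y : EuclideanSpace ℝ (Fin d)) (T : ℝ) :
    (A ∩ Metric.ball x T).ncard ≤ (A ∩ Metric.ball y (T + L)).ncard := by
  classical
  obtain ⟨σ, hσ⟩ := hA (y - x)
  refine Set.ncard_le_ncard_of_injOn
    (fun a => if h : a ∈ A then (σ ⟨a, h⟩ : EuclideanSpace ℝ (Fin d)) else a) ?_ ?_
    (hdisc y (T + L))
  · rintro a ⟨haA, hab⟩
    simp only [dif_pos haA]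
    refine ⟨(σ ⟨a, haA⟩).2, ?_⟩
    rw [mem_ball, dist_eq_norm]
    have h1 := hσ ⟨a, haA⟩
    have h2 : ‖a - x‖ < T := by rw [mem_ball, dist_eq_norm] at hab; exact hab
    calc ‖(σ ⟨a, haA⟩ : EuclideanSpace ℝ (Fin d)) - y‖
        = ‖-((a : EuclideanSpace ℝ (Fin d)) + (y - x) - σ ⟨a, haA⟩) + (a - x)‖ := by
          congr 1; abel
      _ ≤ ‖-((a : EuclideanSpace ℝ (Fin d)) + (y - x) - σ ⟨a, haA⟩)‖ + ‖a - x‖ := norm_add_le _ _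
      _ = ‖(a : EuclideanSpace ℝ (Fin d)) + (y - x) - σ ⟨a, haA⟩‖ + ‖a - x‖ := by rw [norm_neg]
      _ < L + T := add_lt_add h1 h2
      _ = T + L := add_comm _ _
  · intro a ha b hb hab
    simp only [dif_pos ha.1, dif_pos hb.1] at hab
    have := σ.injective (Subtype.ext hab)
    exact congrArg Subtype.val this

/-- Every ball of radius `L` meets `A`. -/
lemma ball_meets (hA : RSI A L) (hne : A.Nonempty) (x : EuclideanSpace ℝ (Fin d)) :
    (A ∩ Metric.ball x L).Nonempty := by
  obtain ⟨a₀, ha₀⟩ := hne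
  obtain ⟨σ, hσ⟩ := hA (x - a₀)
  refine ⟨σ ⟨a₀, ha₀⟩, (σ ⟨a₀, ha₀⟩).2, ?_⟩
  have := hσ ⟨a₀, ha₀⟩
  rw [mem_ball, dist_eq_norm, ← norm_neg]
  convert this using 2
  · rfl
  · abel

lemma L_pos (hA : RSI A L) (hne : A.Nonempty) : 0 < L := by
  obtain ⟨a, _, hab⟩ := ball_meets hA hne 0
  exact lt_of_le_of_lt dist_nonneg hab

lemma lint_eq (hdisc : IsDiscreteSet A) (T R : ℝ) :
    ∫⁻ x in ball (0 : EuclideanSpace ℝ (Fin d)) R,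
        (∑ a ∈ (hdisc 0 (R + T)).toFinset, (ball a T).indicator 1 x) ∂volume
      = ∑ a ∈ (hdisc 0 (R + T)).toFinset,
          volume (ball a T ∩ ball (0 : EuclideanSpace ℝ (Fin d)) R) := by
  rw [lintegral_finset_sum _ (fun a _ => (measurable_one.indicator measurableSet_ball))]
  refine Finset.sum_congr rfl fun a _ => ?_
  rw [lintegral_indicator measurableSet_ball]
  simp only [Pi.one_apply]
  rw [setLIntegral_one, Measure.restrict_apply measurableSet_ball]

lemma lint_val (hdisc : IsDiscreteSet A) (T R : ℝ) (x : EuclideanSpace ℝ (Fin d))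
    (hx : x ∈ ball (0 : EuclideanSpace ℝ (Fin d)) R) :
    (∑ a ∈ (hdisc 0 (R + T)).toFinset, (ball a T).indicator 1 x)
      = ((A ∩ ball x T).ncard : ℝ≥0∞) := by
  classical
  have h1 : (∑ a ∈ (hdisc 0 (R + T)).toFinset,
        (ball a T).indicator (1 : EuclideanSpace ℝ (Fin d) → ℝ≥0∞) x)
      = (((hdisc 0 (R + T)).toFinset.filter (fun a => x ∈ ball a T)).card : ℝ≥0∞) := by
    simp only [Set.indicator_apply, Pi.one_apply]
    rw [Finset.sum_boole]
  rw [h1]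
  congr 1
  have h2 : (((hdisc 0 (R + T)).toFinset.filter (fun a => x ∈ ball a T)) :
        Set (EuclideanSpace ℝ (Fin d)))
      = A ∩ ball x T := by
    ext a
    simp only [Finset.coe_filter, Set.Finite.mem_toFinset, Set.mem_setOf_eq, Set.mem_inter_iff,
      mem_ball]
    constructor
    · rintro ⟨⟨haA, _⟩, hd⟩; exact ⟨haA, by rwa [dist_comm]⟩
    · rintro ⟨haA, hd⟩
      refine ⟨⟨haA, ?_⟩, by rwa [dist_comm]⟩
      calc dist a 0 ≤ dist a x + dist x 0 := dist_triangle _ _ _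
        _ < T + R := add_lt_add hd (by rwa [mem_ball] at hx)
        _ = R + T := add_comm _ _
  rw [← Set.ncard_coe_finset, h2]

lemma key1 (hdisc : IsDiscreteSet A) (hA : RSI A L) (T R : ℝ) (hT : 0 < T) :
    ((A ∩ ball (0 : EuclideanSpace ℝ (Fin d)) (R - T)).ncard : ℝ≥0∞)
        * volume (ball (0 : EuclideanSpace ℝ (Fin d)) T)
      ≤ volume (ball (0 : EuclideanSpace ℝ (Fin d)) R)
        * ((A ∩ ball (0 : EuclideanSpace ℝ (Fin d)) (T + L)).ncard : ℝ≥0∞) := by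
  classical
  set F := (hdisc 0 (R + T)).toFinset with hF
  have upper : ∫⁻ x in ball (0 : EuclideanSpace ℝ (Fin d)) R,
      (∑ a ∈ F, (ball a T).indicator 1 x) ∂volume
      ≤ volume (ball (0 : EuclideanSpace ℝ (Fin d)) R)
        * ((A ∩ ball (0 : EuclideanSpace ℝ (Fin d)) (T + L)).ncard : ℝ≥0∞) := by
    have := setLIntegral_mono (μ := volume) (s := ball (0 : EuclideanSpace ℝ (Fin d)) R)
      (f := fun x => ∑ a ∈ F, (ball a T).indicator 1 x)
      (g := fun _ => ((A ∩ ball (0 : EuclideanSpace ℝ (Fin d)) (T + L)).ncard : ℝ≥0∞))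
      measurable_const ?_
    · calc _ ≤ _ := this
        _ = _ := by rw [setLIntegral_const, mul_comm]
    · intro x hx
      simp only [hF, lint_val hdisc T R x hx]
      exact_mod_cast Nat.cast_le.mpr (count_le hdisc hA x 0 T)
  have lower : ((A ∩ ball (0 : EuclideanSpace ℝ (Fin d)) (R - T)).ncard : ℝ≥0∞)
      * volume (ball (0 : EuclideanSpace ℝ (Fin d)) T)
      ≤ ∫⁻ x in ball (0 : EuclideanSpace ℝ (Fin d)) R,
        (∑ a ∈ F, (ball a T).indicator 1 x) ∂volume := by
    rw [lint_eq hdisc T R]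
    set F' := F.filter (fun a => a ∈ ball (0 : EuclideanSpace ℝ (Fin d)) (R - T)) with hF'
    have hcard : (F'.card : ℝ≥0∞)
        = ((A ∩ ball (0 : EuclideanSpace ℝ (Fin d)) (R - T)).ncard : ℝ≥0∞) := by
      congr 1
      rw [← Set.ncard_coe_finset]
      congr 1
      ext a
      simp only [hF', Finset.coe_filter, Set.Finite.mem_toFinset, Set.mem_setOf_eq,
        Set.mem_inter_iff, hF]
      constructor
      · rintro ⟨⟨h1, _⟩, h2⟩; exact ⟨h1, h2⟩
      · rintro ⟨h1, h2⟩
        exact ⟨⟨h1, ball_subset_ball (by linarith) h2⟩, h2⟩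
    calc ((A ∩ ball (0 : EuclideanSpace ℝ (Fin d)) (R - T)).ncard : ℝ≥0∞)
          * volume (ball (0 : EuclideanSpace ℝ (Fin d)) T)
        = ∑ _a ∈ F', volume (ball (0 : EuclideanSpace ℝ (Fin d)) T) := by
          rw [Finset.sum_const, nsmul_eq_mul, hcard]
      _ = ∑ a ∈ F', volume (ball a T ∩ ball (0 : EuclideanSpace ℝ (Fin d)) R) := by
          refine Finset.sum_congr rfl fun a ha => ?_
          have haRT : a ∈ ball (0 : EuclideanSpace ℝ (Fin d)) (R - T) :=
            (Finset.mem_filter.mp ha).2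
          have hsub : ball a T ⊆ ball (0 : EuclideanSpace ℝ (Fin d)) R := by
            apply ball_subset_ball'
            rw [mem_ball] at haRT
            linarith
          rw [Set.inter_eq_left.mpr hsub]
          exact (Measure.addHaar_ball_center volume a T).symm
      _ ≤ ∑ a ∈ F, volume (ball a T ∩ ball (0 : EuclideanSpace ℝ (Fin d)) R) :=
          Finset.sum_le_sum_of_subset (Finset.filter_subset _ _)
  exact lower.trans upper

lemma key2 (hdisc : IsDiscreteSet A) (hA : RSI A L) (T R : ℝ) :
    volume (ball (0 : EuclideanSpace ℝ (Fin d)) R)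
        * ((A ∩ ball (0 : EuclideanSpace ℝ (Fin d)) (T - L)).ncard : ℝ≥0∞)
      ≤ ((A ∩ ball (0 : EuclideanSpace ℝ (Fin d)) (R + T)).ncard : ℝ≥0∞)
        * volume (ball (0 : EuclideanSpace ℝ (Fin d)) T) := by
  classical
  set F := (hdisc 0 (R + T)).toFinset with hF
  have lower : volume (ball (0 : EuclideanSpace ℝ (Fin d)) R)
      * ((A ∩ ball (0 : EuclideanSpace ℝ (Fin d)) (T - L)).ncard : ℝ≥0∞)
      ≤ ∫⁻ x in ball (0 : EuclideanSpace ℝ (Fin d)) R,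
        (∑ a ∈ F, (ball a T).indicator 1 x) ∂volume := by
    have := setLIntegral_mono (μ := volume) (s := ball (0 : EuclideanSpace ℝ (Fin d)) R)
      (f := fun _ => ((A ∩ ball (0 : EuclideanSpace ℝ (Fin d)) (T - L)).ncard : ℝ≥0∞))
      (g := fun x => ∑ a ∈ F, (ball a T).indicator 1 x)
      (Finset.measurable_sum _ fun a _ => measurable_one.indicator measurableSet_ball) ?_
    · calc volume (ball (0 : EuclideanSpace ℝ (Fin d)) R)
            * ((A ∩ ball (0 : EuclideanSpace ℝ (Fin d)) (T - L)).ncard : ℝ≥0∞)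
          = ∫⁻ _x in ball (0 : EuclideanSpace ℝ (Fin d)) R,
              ((A ∩ ball (0 : EuclideanSpace ℝ (Fin d)) (T - L)).ncard : ℝ≥0∞) ∂volume := by
            rw [setLIntegral_const, mul_comm]
        _ ≤ _ := this
    · intro x hx
      simp only [hF, lint_val hdisc T R x hx]
      have h := count_le hdisc hA (0 : EuclideanSpace ℝ (Fin d)) x (T - L)
      rw [sub_add_cancel] at h
      exact_mod_cast Nat.cast_le.mpr h
  have upper : ∫⁻ x in ball (0 : EuclideanSpace ℝ (Fin d)) R,
      (∑ a ∈ F, (ball a T).indicator 1 x) ∂volume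
      ≤ ((A ∩ ball (0 : EuclideanSpace ℝ (Fin d)) (R + T)).ncard : ℝ≥0∞)
        * volume (ball (0 : EuclideanSpace ℝ (Fin d)) T) := by
    rw [lint_eq hdisc T R]
    calc ∑ a ∈ F, volume (ball a T ∩ ball (0 : EuclideanSpace ℝ (Fin d)) R)
        ≤ ∑ _a ∈ F, volume (ball (0 : EuclideanSpace ℝ (Fin d)) T) := by
          refine Finset.sum_le_sum fun a _ => ?_
          rw [← Measure.addHaar_ball_center volume a T]
          exact measure_mono Set.inter_subset_left
      _ = ((A ∩ ball (0 : EuclideanSpace ℝ (Fin d)) (R + T)).ncard : ℝ≥0∞)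
          * volume (ball (0 : EuclideanSpace ℝ (Fin d)) T) := by
          rw [Finset.sum_const, nsmul_eq_mul]
          congr 2
          rw [← Set.ncard_coe_finset, (hdisc 0 (R + T)).coe_toFinset]
  exact lower.trans upper

lemma ratio_tendsto (d : ℕ) (c : ℝ) (hc : 0 < c) (a b : ℝ) :
    Tendsto (fun S : ℝ => (c * (S + a) ^ d) / (c * (S + b) ^ d)) atTop (nhds 1) := by
  have h1 : Tendsto (fun S : ℝ => 1 + (a - b) / (S + b)) atTop (nhds 1) := by
    have := Tendsto.div_atTop (tendsto_const_nhds (x := a - b))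
      (tendsto_atTop_add_const_right atTop b tendsto_id)
    simpa using (tendsto_const_nhds (x := (1:ℝ))).add this
  have h2 : Tendsto (fun S : ℝ => (1 + (a - b) / (S + b)) ^ d) atTop (nhds 1) := by
    simpa using h1.pow d
  refine h2.congr' ?_
  filter_upwards [eventually_gt_atTop (max (-a) (-b))] with S hS
  have hSa : 0 < S + a := by have := (max_lt_iff.mp hS).1; linarith
  have hSb : 0 < S + b := by have := (max_lt_iff.mp hS).2; linarith
  have h : 1 + (a - b) / (S + b) = (S + a) / (S + b) := by field_simp; ring
  rw [h, div_pow, mul_div_mul_left _ _ (ne_of_gt hc)]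

lemma abstract_density (d : ℕ) (φ : ℝ → ℝ) (c L : ℝ) (hc : 0 < c) (hL : 0 < L)
    (hφ0 : ∀ T, 0 ≤ φ T)
    (hφ1 : 1 ≤ φ L)
    (K1 : ∀ T R : ℝ, 0 < T → 0 < R → φ (R - T) * (c * T ^ d) ≤ (c * R ^ d) * φ (T + L))
    (K2 : ∀ T R : ℝ, 0 < T → 0 < R → (c * R ^ d) * φ (T - L) ≤ φ (R + T) * (c * T ^ d)) :
    ∃ D : ℝ, 0 < D ∧ ∀ ε > (0:ℝ), ∀ᶠ T in atTop,
      D - ε < φ (T - L) / (c * T ^ d) ∧ φ (T + L) / (c * T ^ d) < D + ε := by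
  have Vpos : ∀ r : ℝ, 0 < r → 0 < c * r ^ d := fun r hr => by positivity
  have unn : ∀ T : ℝ, 0 < T → 0 ≤ φ (T + L) / (c * T ^ d) := fun T hT =>
    div_nonneg (hφ0 _) (Vpos T hT).le
  have ha : ∀ T : ℝ, 0 < T → ∀ S : ℝ, 0 < S →
      φ S ≤ (c * (S + T) ^ d) * (φ (T + L) / (c * T ^ d)) := by
    intro T hT S hS
    have h := K1 T (S + T) hT (by linarith)
    rw [add_sub_cancel_right] at h
    rw [← mul_div_assoc, le_div_iff₀ (Vpos T hT)]
    linarith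
  have hb : ∀ T : ℝ, 0 < T → ∀ S : ℝ, T < S →
      φ (T - L) / (c * T ^ d) ≤ φ S / (c * (S - T) ^ d) := by
    intro T hT S hS
    have h := K2 T (S - T) hT (by linarith)
    rw [sub_add_cancel] at h
    rw [div_le_div_iff₀ (Vpos T hT) (Vpos _ (by linarith))]
    linarith
  have lu : ∀ T : ℝ, 0 < T → ∀ T' : ℝ, 0 < T' →
      φ (T - L) / (c * T ^ d) ≤ φ (T' + L) / (c * T' ^ d) := by
    intro T hT T' hT'
    have lim : Tendsto (fun S : ℝ =>
        (φ (T' + L) / (c * T' ^ d)) * ((c * (S + T') ^ d) / (c * (S + (-T)) ^ d)))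
        atTop (nhds (φ (T' + L) / (c * T' ^ d))) := by
      simpa using tendsto_const_nhds.mul (ratio_tendsto d c hc T' (-T))
    refine ge_of_tendsto lim ?_
    filter_upwards [eventually_gt_atTop (max T 0)] with S hS
    have hST : T < S := (max_lt_iff.mp hS).1
    have hS0 : 0 < S := (max_lt_iff.mp hS).2
    calc φ (T - L) / (c * T ^ d) ≤ φ S / (c * (S - T) ^ d) := hb T hT S hST
      _ ≤ ((c * (S + T') ^ d) * (φ (T' + L) / (c * T' ^ d))) / (c * (S - T) ^ d) := by
          gcongr
          exact ha T' hT' S hS0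
      _ = (φ (T' + L) / (c * T' ^ d)) * ((c * (S + T') ^ d) / (c * (S + (-T)) ^ d)) := by
          rw [← sub_eq_add_neg]
          ring
  set U : Set ℝ := (fun T => φ (T + L) / (c * T ^ d)) '' Ioi (0:ℝ) with hU
  have hUne : U.Nonempty := ⟨_, ⟨1, by norm_num, rfl⟩⟩
  have hUbdd : BddBelow U := by
    refine ⟨0, ?_⟩
    rintro y ⟨T, hT, rfl⟩
    exact unn T hT
  set D := sInf U with hD
  have hDle : ∀ T : ℝ, 0 < T → D ≤ φ (T + L) / (c * T ^ d) :=
    fun T hT => csInf_le hUbdd ⟨T, hT, rfl⟩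
  have hDge : ∀ T : ℝ, 0 < T → φ (T - L) / (c * T ^ d) ≤ D := by
    intro T hT
    refine le_csInf hUne ?_
    rintro y ⟨T', hT', rfl⟩
    exact lu T hT T' hT'
  have hDpos : 0 < D := by
    have h2 : (1:ℝ) ≤ φ (2 * L - L) := by rw [show 2 * L - L = L by ring]; exact hφ1
    exact lt_of_lt_of_le (div_pos (lt_of_lt_of_le one_pos h2) (Vpos _ (by linarith)))
      (hDge (2 * L) (by linarith))
  refine ⟨D, hDpos, ?_⟩
  intro ε hε
  have hup : ∀ᶠ T in atTop, φ (T + L) / (c * T ^ d) < D + ε := by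
    obtain ⟨y, ⟨T', hT', rfl⟩, hy⟩ := exists_lt_of_csInf_lt hUne
      (show D < D + ε / 2 by linarith)
    have lim : Tendsto (fun T : ℝ =>
        (φ (T' + L) / (c * T' ^ d)) * ((c * (T + (L + T')) ^ d) / (c * (T + 0) ^ d)))
        atTop (nhds (φ (T' + L) / (c * T' ^ d))) := by
      simpa using tendsto_const_nhds.mul (ratio_tendsto d c hc (L + T') 0)
    have hev := lim.eventually_lt_const (show φ (T' + L) / (c * T' ^ d) < D + ε by linarith)
    filter_upwards [hev, eventually_gt_atTop (0:ℝ)] with T hT1 hT0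
    have hb1 : φ (T + L) ≤ (c * (T + L + T') ^ d) * (φ (T' + L) / (c * T' ^ d)) :=
      ha T' hT' (T + L) (by linarith)
    calc φ (T + L) / (c * T ^ d)
        ≤ ((c * (T + L + T') ^ d) * (φ (T' + L) / (c * T' ^ d))) / (c * T ^ d) := by
          gcongr
      _ = (φ (T' + L) / (c * T' ^ d)) * ((c * (T + (L + T')) ^ d) / (c * (T + 0) ^ d)) := by
          rw [add_zero, ← add_assoc]; ring
      _ < D + ε := hT1
  have hlo : ∀ᶠ T in atTop, D - ε < φ (T - L) / (c * T ^ d) := by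
    have lim : Tendsto (fun T : ℝ => D * ((c * (T + (-(2*L))) ^ d) / (c * (T + 0) ^ d)))
        atTop (nhds D) := by
      simpa using tendsto_const_nhds.mul (ratio_tendsto d c hc (-(2*L)) 0)
    have hev := lim.eventually_const_lt (show D - ε < D by linarith)
    filter_upwards [hev, eventually_gt_atTop (2*L)] with T hT1 hT2
    have hT0 : 0 < T := by linarith
    have h1 : D ≤ φ ((T - 2*L) + L) / (c * (T - 2*L) ^ d) := hDle (T - 2*L) (by linarith)
    have h2 : D * (c * (T - 2*L) ^ d) ≤ φ (T - L) := by
      rw [show (T - 2*L) + L = T - L by ring] at h1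
      rw [← le_div_iff₀ (Vpos _ (by linarith))]
      exact h1
    calc D - ε < D * ((c * (T + (-(2*L))) ^ d) / (c * (T + 0) ^ d)) := hT1
      _ = (D * (c * (T - 2*L) ^ d)) / (c * T ^ d) := by
          rw [add_zero, ← sub_eq_add_neg]; ring
      _ ≤ φ (T - L) / (c * T ^ d) := by
          gcongr
  filter_upwards [hup, hlo] with T h1 h2
  exact ⟨h2, h1⟩

end Stmt6Aux

open Stmt6Aux Metric ENNReal Filter in
theorem stmt6 {d : ℕ} (A : Set (EuclideanSpace ℝ (Fin d))) (L : ℝ)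
    (hdisc : IsDiscreteSet A) (hA : RSI A L) (hne : A.Nonempty) :
    ∃ D : ℝ, 0 < D ∧
      ∀ ε > (0 : ℝ), ∃ T₀ : ℝ, ∀ T : ℝ, T₀ ≤ T → ∀ x : EuclideanSpace ℝ (Fin d),
        |((A ∩ Metric.ball x T).ncard : ℝ) / (volume (Metric.ball x T)).toReal - D| < ε := by
  have hL : 0 < L := L_pos hA hne
  set c : ℝ := (volume (ball (0 : EuclideanSpace ℝ (Fin d)) 1)).toReal with hcdef
  have hc : 0 < c := ENNReal.toReal_pos (measure_ball_pos volume 0 one_pos).ne'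
    measure_ball_lt_top.ne
  have hVol : ∀ r : ℝ, 0 < r →
      (volume (ball (0 : EuclideanSpace ℝ (Fin d)) r)).toReal = c * r ^ d := by
    intro r hr
    rw [Measure.addHaar_ball_of_pos volume 0 hr, ENNReal.toReal_mul,
      ENNReal.toReal_ofReal (by positivity), finrank_euclideanSpace_fin, mul_comm]
  set φ : ℝ → ℝ := fun T => ((A ∩ ball (0 : EuclideanSpace ℝ (Fin d)) T).ncard : ℝ) with hφ
  have hφ0 : ∀ T, 0 ≤ φ T := fun T => Nat.cast_nonneg _
  have hφ1 : 1 ≤ φ L := by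
    have := (ball_meets hA hne 0).ncard_pos (hdisc 0 L)
    exact_mod_cast Nat.one_le_cast.mpr this
  have hK1 : ∀ T R : ℝ, 0 < T → 0 < R →
      φ (R - T) * (c * T ^ d) ≤ (c * R ^ d) * φ (T + L) := by
    intro T R hT hR
    have h := key1 hdisc hA T R hT
    have h2ne : volume (ball (0 : EuclideanSpace ℝ (Fin d)) R)
        * ((A ∩ ball (0 : EuclideanSpace ℝ (Fin d)) (T + L)).ncard : ℝ≥0∞) ≠ ∞ :=
      ENNReal.mul_ne_top measure_ball_lt_top.ne (ENNReal.natCast_ne_top _)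
    have := ENNReal.toReal_mono h2ne h
    rwa [ENNReal.toReal_mul, ENNReal.toReal_mul, ENNReal.toReal_natCast,
      ENNReal.toReal_natCast, hVol T hT, hVol R hR] at this
  have hK2 : ∀ T R : ℝ, 0 < T → 0 < R →
      (c * R ^ d) * φ (T - L) ≤ φ (R + T) * (c * T ^ d) := by
    intro T R hT hR
    have h := key2 hdisc hA T R
    have h2ne : ((A ∩ ball (0 : EuclideanSpace ℝ (Fin d)) (R + T)).ncard : ℝ≥0∞)
        * volume (ball (0 : EuclideanSpace ℝ (Fin d)) T) ≠ ∞ :=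
      ENNReal.mul_ne_top (ENNReal.natCast_ne_top _) measure_ball_lt_top.ne
    have := ENNReal.toReal_mono h2ne h
    rwa [ENNReal.toReal_mul, ENNReal.toReal_mul, ENNReal.toReal_natCast,
      ENNReal.toReal_natCast, hVol T hT, hVol R hR] at this
  obtain ⟨D, hDpos, hconv⟩ := abstract_density d φ c L hc hL hφ0 hφ1 hK1 hK2
  refine ⟨D, hDpos, ?_⟩
  intro ε hε
  obtain ⟨T₁, hT₁⟩ := eventually_atTop.mp (hconv ε hε)
  refine ⟨max T₁ 1, ?_⟩
  intro T hT x
  have hT0 : (0:ℝ) < T := lt_of_lt_of_le one_pos (le_trans (le_max_right _ _) hT)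
  obtain ⟨hlow, hup⟩ := hT₁ T (le_trans (le_max_left _ _) hT)
  have hvol : (volume (ball x T)).toReal = c * T ^ d := by
    rw [Measure.addHaar_ball_center volume x T]
    exact hVol T hT0
  have hcd : (0:ℝ) < c * T ^ d := by positivity
  have hub : ((A ∩ ball x T).ncard : ℝ) ≤ φ (T + L) := by
    exact_mod_cast Nat.cast_le.mpr (count_le hdisc hA x 0 T)
  have hlb : φ (T - L) ≤ ((A ∩ ball x T).ncard : ℝ) := by
    have h := count_le hdisc hA (0 : EuclideanSpace ℝ (Fin d)) x (T - L)
    rw [sub_add_cancel] at h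
    exact_mod_cast Nat.cast_le.mpr h
  rw [hvol, abs_lt]
  constructor
  · have : φ (T - L) / (c * T ^ d) ≤ ((A ∩ ball x T).ncard : ℝ) / (c * T ^ d) :=
      (div_le_div_iff_of_pos_right hcd).mpr hlb
    linarith
  · have : ((A ∩ ball x T).ncard : ℝ) / (c * T ^ d) ≤ φ (T + L) / (c * T ^ d) :=
      (div_le_div_iff_of_pos_right hcd).mpr hub
    linarith
end
end

section
/- Every roughly shift-invariant discrete set A ⊆ ℝ^d with density D is uniformly spread: there exist a constant C < ∞ and a bijection Θ : A → D^{−1/d}·ℤ^d such that sup_{a∈A} |a − Θ(a)| < C. -/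
open Set MeasureTheory

noncomputable section

/-- The scaled lattice `D^{-1/d}·ℤ^d` in Euclidean `ℝ^d`. -/
def lattice {d : ℕ} (D : ℝ) : Set (EuclideanSpace ℝ (Fin d)) :=
  {y | ∀ j, ∃ m : ℤ, y j = D ^ (-(1 : ℝ) / d) * m}


open scoped ENNReal
open Filter Topology

theorem sb_local {α β : Type*} [Nonempty β] {f : α → β} {g : β → α}
    (hf : Function.Injective f) (hg : Function.Injective g) :
    ∃ h : α ≃ β, ∀ a, h a = f a ∨ g (h a) = a := by
  classical
  set C : Set α := ⋃ n : ℕ, (g ∘ f)^[n] '' (Set.range g)ᶜ with hC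
  have hmem : ∀ a, a ∉ C → a ∈ Set.range g := by
    intro a ha
    by_contra h
    exact ha (Set.mem_iUnion.2 ⟨0, by simpa using h⟩)
  have hgfC : ∀ a, a ∈ C → g (f a) ∈ C := by
    intro a ha
    rcases Set.mem_iUnion.1 ha with ⟨n, x, hx, hxe⟩
    refine Set.mem_iUnion.2 ⟨n + 1, x, hx, ?_⟩
    rw [Function.iterate_succ_apply', hxe]
    rfl
  let h0 : α → β := fun a => if a ∈ C then f a else Function.invFun g a
  have hinvg : ∀ a, a ∉ C → g (Function.invFun g a) = a := fun a ha =>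
    Function.invFun_eq (hmem a ha)
  have h0C : ∀ a, a ∈ C → h0 a = f a := fun a ha => if_pos ha
  have h0nC : ∀ a, a ∉ C → h0 a = Function.invFun g a := fun a ha => if_neg ha
  have hinj : Function.Injective h0 := by
    intro a a' heq
    by_cases h1 : a ∈ C <;> by_cases h2 : a' ∈ C
    · rw [h0C a h1, h0C a' h2] at heq; exact hf heq
    · rw [h0C a h1, h0nC a' h2] at heq
      exfalso; apply h2
      have : g (f a) = a' := by rw [heq]; exact hinvg a' h2
      rw [← this]; exact hgfC a h1
    · rw [h0nC a h1, h0C a' h2] at heq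
      exfalso; apply h1
      have : g (f a') = a := by rw [← heq]; exact hinvg a h1
      rw [← this]; exact hgfC a' h2
    · rw [h0nC a h1, h0nC a' h2] at heq
      have := hinvg a h1
      rw [heq, hinvg a' h2] at this; exact this.symm
  have hsurj : Function.Surjective h0 := by
    intro b
    by_cases hb : g b ∈ C
    · rcases Set.mem_iUnion.1 hb with ⟨n, x, hx, hxe⟩
      cases n with
      | zero =>
        exfalso
        simp only [Function.iterate_zero, id] at hxe
        exact hx ⟨b, hxe.symm⟩
      | succ n =>
        rw [Function.iterate_succ_apply'] at hxe
        set a := (g ∘ f)^[n] x with ha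
        have haC : a ∈ C := Set.mem_iUnion.2 ⟨n, x, hx, rfl⟩
        have hfa : f a = b := hg hxe
        exact ⟨a, by rw [h0C a haC, hfa]⟩
    · refine ⟨g b, ?_⟩
      rw [h0nC (g b) hb]
      exact hg (hinvg (g b) hb)
  refine ⟨Equiv.ofBijective h0 ⟨hinj, hsurj⟩, fun a => ?_⟩
  by_cases h1 : a ∈ C
  · left; exact h0C a h1
  · right
    have : (Equiv.ofBijective h0 ⟨hinj, hsurj⟩) a = h0 a := rfl
    rw [this, h0nC a h1, hinvg a h1]

namespace Aux

variable {d : ℕ} {D : ℝ}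

def sc (D : ℝ) (d : ℕ) : ℝ := D ^ (-(1 : ℝ) / (d : ℝ))
lemma sc_pos (hD : 0 < D) : 0 < sc D d := Real.rpow_pos_of_pos hD _
def latp (D : ℝ) {d : ℕ} (z : Fin d → ℤ) : EuclideanSpace ℝ (Fin d) :=
  WithLp.toLp 2 (fun j => sc D d * z j)
lemma latp_mem (z : Fin d → ℤ) : latp D z ∈ lattice D := fun j => ⟨z j, rfl⟩

lemma sc_pow (hD : 0 < D) (hd : 1 ≤ d) : sc D d ^ d = D⁻¹ := by
  have hd0 : (d : ℝ) ≠ 0 := by positivity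
  rw [sc, ← Real.rpow_natCast (D ^ (-(1:ℝ)/(d:ℝ))) d, ← Real.rpow_mul hD.le]
  rw [div_mul_cancel₀ _ hd0]
  exact Real.rpow_neg_one D

lemma lattice_zero : (0 : EuclideanSpace ℝ (Fin d)) ∈ lattice D :=
  fun j => ⟨0, by simp⟩

lemma lattice_sub {x y : EuclideanSpace ℝ (Fin d)} (hx : x ∈ lattice D) (hy : y ∈ lattice D) :
    x - y ∈ lattice D := by
  intro j
  obtain ⟨m, hm⟩ := hx j
  obtain ⟨m', hm'⟩ := hy j
  exact ⟨m - m', by push_cast; simp [PiLp.sub_apply, hm, hm']; ring⟩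

lemma lattice_neg {x : EuclideanSpace ℝ (Fin d)} (hx : x ∈ lattice D) :
    -x ∈ lattice D := by
  have := lattice_sub (lattice_zero (D := D)) hx
  simpa using this

lemma abs_coord_le_norm (x : EuclideanSpace ℝ (Fin d)) (j : Fin d) : |x j| ≤ ‖x‖ := by
  rw [EuclideanSpace.norm_eq]
  rw [← Real.sqrt_sq_eq_abs]
  apply Real.sqrt_le_sqrt
  have : x j ^ 2 = ‖x j‖ ^ 2 := by rw [Real.norm_eq_abs, sq_abs]
  rw [this]
  exact Finset.single_le_sum (f := fun i => ‖x i‖ ^ 2) (fun i _ => by positivity) (Finset.mem_univ j)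

lemma lattice_finite (hD : 0 < D) (x : EuclideanSpace ℝ (Fin d)) (r : ℝ) :
    (lattice D ∩ Metric.ball x r).Finite := by
  have hsc := sc_pos (d := d) hD
  set B : ℝ := (‖x‖ + |r|) / sc D d with hB
  have hsub : lattice D ∩ Metric.ball x r ⊆
      latp D '' (Set.pi univ fun _ : Fin d => Set.Icc (-⌈B⌉) ⌈B⌉) := by
    rintro y ⟨hy, hball⟩
    have hynorm : ‖y‖ < ‖x‖ + |r| := by
      have : dist y x < r := Metric.mem_ball.1 hball
      calc ‖y‖ ≤ ‖x‖ + ‖y - x‖ := norm_le_insert' y x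
        _ < ‖x‖ + r := by rw [← dist_eq_norm]; linarith
        _ ≤ ‖x‖ + |r| := by have := le_abs_self r; linarith
    set z : Fin d → ℤ := fun j => Classical.choose (hy j) with hz
    have hzspec : ∀ j, y j = sc D d * z j := fun j => Classical.choose_spec (hy j)
    refine ⟨z, ?_, ?_⟩
    · intro j _
      have h1 : |sc D d * (z j : ℝ)| ≤ ‖y‖ := by rw [← hzspec j]; exact abs_coord_le_norm y j
      rw [abs_mul, abs_of_pos hsc] at h1
      have h2 : |(z j : ℝ)| ≤ B := by
        rw [hB, le_div_iff₀ hsc]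
        calc |(z j : ℝ)| * sc D d = sc D d * |(z j : ℝ)| := by ring
          _ ≤ ‖y‖ := h1
          _ ≤ ‖x‖ + |r| := hynorm.le
      have h3 : |(z j : ℝ)| ≤ (⌈B⌉ : ℝ) := h2.trans (Int.le_ceil B)
      rw [abs_le] at h3
      constructor
      · exact_mod_cast h3.1
      · exact_mod_cast h3.2
    · apply PiLp.ext
      intro j
      exact (hzspec j).symm
  exact Set.Finite.subset (Set.Finite.image _ (Set.Finite.pi fun _ => Set.finite_Icc _ _)) hsub

def cell (D : ℝ) {d : ℕ} (y : EuclideanSpace ℝ (Fin d)) : Set (EuclideanSpace ℝ (Fin d)) :=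
  {w | ∀ j, w j ∈ Set.Ico (y j) (y j + sc D d)}

lemma cell_eq_preimage (y : EuclideanSpace ℝ (Fin d)) :
    cell D y = (MeasurableEquiv.toLp 2 (Fin d → ℝ)).symm ⁻¹'
      (Set.pi univ fun j => Set.Ico (y j) (y j + sc D d)) := by
  ext w
  simp [cell, Set.mem_pi]

lemma measurableSet_cell (y : EuclideanSpace ℝ (Fin d)) : MeasurableSet (cell D y) := by
  rw [cell_eq_preimage]
  exact (MeasurableEquiv.measurable _) (MeasurableSet.univ_pi fun j => measurableSet_Ico)

lemma volume_cell (hD : 0 < D) (y : EuclideanSpace ℝ (Fin d)) :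
    volume (cell D y) = ENNReal.ofReal (sc D d ^ d) := by
  rw [cell_eq_preimage]
  rw [(EuclideanSpace.volume_preserving_symm_measurableEquiv_toLp (Fin d)).measure_preimage
    (MeasurableSet.univ_pi fun j => measurableSet_Ico).nullMeasurableSet]
  rw [volume_pi_pi]
  simp only [Real.volume_Ico, add_sub_cancel_left]
  rw [Finset.prod_const, Finset.card_univ, Fintype.card_fin]
  rw [← ENNReal.ofReal_pow (sc_pos hD).le]

lemma norm_le_of_coords (hD : 0 < D) (hd : 1 ≤ d) {x : EuclideanSpace ℝ (Fin d)}
    (h : ∀ j, |x j| ≤ sc D d) : ‖x‖ ≤ sc D d * d := by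
  have hsc := sc_pos (d := d) hD
  rw [EuclideanSpace.norm_eq]
  have h1 : ∑ i, ‖x i‖ ^ 2 ≤ ∑ _i : Fin d, sc D d ^ 2 := by
    apply Finset.sum_le_sum
    intro i _
    rw [Real.norm_eq_abs]
    exact pow_le_pow_left₀ (abs_nonneg _) (h i) 2
  have h2 : ∑ _i : Fin d, sc D d ^ 2 = d * sc D d ^ 2 := by
    rw [Finset.sum_const, Finset.card_univ, Fintype.card_fin, nsmul_eq_mul]
  calc √(∑ i, ‖x i‖ ^ 2) ≤ √((d : ℝ) * sc D d ^ 2) := Real.sqrt_le_sqrt (h1.trans h2.le)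
    _ ≤ √((sc D d * d) ^ 2) := by
        apply Real.sqrt_le_sqrt
        have : (1:ℝ) ≤ d := by exact_mod_cast hd
        nlinarith [sq_nonneg (sc D d)]
    _ = sc D d * d := Real.sqrt_sq (by positivity)

def rnd (D : ℝ) {d : ℕ} (x : EuclideanSpace ℝ (Fin d)) : EuclideanSpace ℝ (Fin d) :=
  latp D fun j => ⌊x j / sc D d⌋

lemma rnd_mem (x : EuclideanSpace ℝ (Fin d)) : rnd D x ∈ lattice D := latp_mem _

lemma rnd_coord (hD : 0 < D) (x : EuclideanSpace ℝ (Fin d)) (j : Fin d) :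
    0 ≤ x j - rnd D x j ∧ x j - rnd D x j < sc D d := by
  have hsc := sc_pos (d := d) hD
  have h1 : rnd D x j = sc D d * ⌊x j / sc D d⌋ := rfl
  constructor
  · rw [h1, sub_nonneg, mul_comm]
    exact (le_div_iff₀ hsc).1 (Int.floor_le _)
  · rw [h1]
    have h2 : x j / sc D d < ⌊x j / sc D d⌋ + 1 := Int.lt_floor_add_one _
    nlinarith [(div_lt_iff₀ hsc).1 h2]

lemma norm_sub_rnd (hD : 0 < D) (hd : 1 ≤ d) (x : EuclideanSpace ℝ (Fin d)) :
    ‖x - rnd D x‖ ≤ sc D d * d := by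
  apply norm_le_of_coords hD hd
  intro j
  obtain ⟨h1, h2⟩ := rnd_coord hD x j
  have : (x - rnd D x) j = x j - rnd D x j := rfl
  rw [this, abs_of_nonneg h1]
  exact h2.le

lemma mem_cell_rnd (hD : 0 < D) (x : EuclideanSpace ℝ (Fin d)) : x ∈ cell D (rnd D x) := by
  intro j
  obtain ⟨h1, h2⟩ := rnd_coord hD x j
  exact ⟨by linarith, by linarith⟩

lemma cell_subset_ball (hD : 0 < D) (hd : 1 ≤ d) {y w : EuclideanSpace ℝ (Fin d)}
    (hw : w ∈ cell D y) : ‖w - y‖ ≤ sc D d * d := by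
  apply norm_le_of_coords hD hd
  intro j
  obtain ⟨h1, h2⟩ := hw j
  have : (w - y) j = w j - y j := rfl
  rw [this, abs_of_nonneg (by linarith)]
  linarith

lemma cell_disjoint (hD : 0 < D) {y y' : EuclideanSpace ℝ (Fin d)}
    (hy : y ∈ lattice D) (hy' : y' ∈ lattice D) (hne : y ≠ y') :
    Disjoint (cell D y) (cell D y') := by
  have hsc := sc_pos (d := d) hD
  rw [Set.disjoint_left]
  intro w hw hw'
  apply hne
  apply PiLp.ext
  intro j
  by_contra hj
  obtain ⟨m, hm⟩ := hy j
  obtain ⟨m', hm'⟩ := hy' j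
  have hmne : m ≠ m' := by
    intro h; apply hj; rw [hm, hm', h]
  have habs : (1 : ℝ) ≤ |(m : ℝ) - m'| := by
    have : (m : ℝ) - m' = ((m - m' : ℤ) : ℝ) := by push_cast; ring
    rw [this, ← Int.cast_abs]
    exact_mod_cast Int.one_le_abs (sub_ne_zero.2 hmne)
  have hd1 := (hw j).1
  have hd2 := (hw j).2
  have hd3 := (hw' j).1
  have hd4 := (hw' j).2
  have hyy : |y j - y' j| ≥ sc D d := by
    have hsc' : |D ^ (-(1:ℝ) / (d:ℝ))| = sc D d := abs_of_pos hsc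
    rw [hm, hm', ← mul_sub, abs_mul, hsc']
    calc sc D d = sc D d * 1 := (mul_one _).symm
      _ ≤ sc D d * |(m:ℝ) - m'| := by nlinarith
  have hlt : |y j - y' j| < sc D d := by
    rw [abs_lt]; constructor <;> linarith
  linarith

lemma euclidean_nontrivial (hd : 1 ≤ d) : Nontrivial (EuclideanSpace ℝ (Fin d)) := by
  have h : EuclideanSpace.single (⟨0, hd⟩ : Fin d) (1 : ℝ) ≠ 0 := by
    intro h
    have h0 : EuclideanSpace.single (⟨0, hd⟩ : Fin d) (1 : ℝ) ⟨0, hd⟩ = 0 := by rw [h]; rfl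
    rw [EuclideanSpace.single_apply, if_pos rfl] at h0
    exact one_ne_zero h0
  exact nontrivial_of_ne _ _ h

lemma volume_ball_eq (hd : 1 ≤ d) (x : EuclideanSpace ℝ (Fin d)) {r : ℝ} (hr : 0 ≤ r) :
    volume (Metric.ball x r) =
      ENNReal.ofReal (r ^ d) * volume (Metric.ball (0 : EuclideanSpace ℝ (Fin d)) 1) := by
  haveI := euclidean_nontrivial hd
  rw [Measure.addHaar_ball volume x hr, finrank_euclideanSpace_fin]

lemma lattice_count_bounds (hD : 0 < D) (hd : 1 ≤ d) (T : ℝ) :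
    volume (Metric.ball (0 : EuclideanSpace ℝ (Fin d)) (T - sc D d * d)) ≤
      ((lattice D ∩ Metric.ball (0 : EuclideanSpace ℝ (Fin d)) T).ncard : ℝ≥0∞) *
        ENNReal.ofReal (sc D d ^ d) ∧
    ((lattice D ∩ Metric.ball (0 : EuclideanSpace ℝ (Fin d)) T).ncard : ℝ≥0∞) *
        ENNReal.ofReal (sc D d ^ d) ≤
      volume (Metric.ball (0 : EuclideanSpace ℝ (Fin d)) (T + sc D d * d)) := by
  have hfin := lattice_finite hD (0 : EuclideanSpace ℝ (Fin d)) T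
  have hfin := lattice_finite hD (0 : EuclideanSpace ℝ (Fin d)) T
  set Vfin := hfin.toFinset with hVfin
  have hcard : (lattice D ∩ Metric.ball (0 : EuclideanSpace ℝ (Fin d)) T).ncard = Vfin.card :=
    Set.ncard_eq_toFinset_card _ hfin
  have hmemV : ∀ y, y ∈ Vfin ↔ y ∈ lattice D ∧ y ∈ Metric.ball (0 : EuclideanSpace ℝ (Fin d)) T := by
    intro y; rw [hVfin, Set.Finite.mem_toFinset]; rfl
  have hdisj : (↑Vfin : Set (EuclideanSpace ℝ (Fin d))).PairwiseDisjoint (cell D) := by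
    intro y hy y' hy' hne
    exact cell_disjoint hD ((hmemV y).1 (by exact_mod_cast hy)).1 ((hmemV y').1 (by exact_mod_cast hy')).1 hne
  have hvol_union : volume (⋃ y ∈ Vfin, cell D y) = (Vfin.card : ℝ≥0∞) * ENNReal.ofReal (sc D d ^ d) := by
    rw [measure_biUnion_finset hdisj (fun y _ => measurableSet_cell y)]
    rw [Finset.sum_congr rfl (fun y _ => volume_cell hD y), Finset.sum_const, nsmul_eq_mul]
  constructor
  · rw [hcard, ← hvol_union]
    apply measure_mono
    intro x hx
    rw [Metric.mem_ball, dist_zero_right] at hx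
    have hx' : ‖x‖ < T - sc D d * d := hx
    refine Set.mem_iUnion₂.2 ⟨rnd D x, ?_, mem_cell_rnd hD x⟩
    rw [hmemV]
    refine ⟨rnd_mem x, ?_⟩
    rw [Metric.mem_ball, dist_zero_right]
    calc ‖rnd D x‖ ≤ ‖x‖ + ‖x - rnd D x‖ := by
          have := norm_sub_rev x (rnd D x)
          have h2 := norm_le_insert' (rnd D x) x
          calc ‖rnd D x‖ ≤ ‖x‖ + ‖rnd D x - x‖ := h2
            _ = ‖x‖ + ‖x - rnd D x‖ := by rw [← norm_sub_rev]
      _ ≤ ‖x‖ + sc D d * d := by have := norm_sub_rnd hD hd x; linarith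
      _ < T := by linarith
  · rw [hcard, ← hvol_union]
    apply measure_mono
    intro w hw
    rw [Set.mem_iUnion₂] at hw
    obtain ⟨y, hy, hwy⟩ := hw
    rw [hmemV] at hy
    obtain ⟨hylat, hyball⟩ := hy
    rw [Metric.mem_ball, dist_zero_right] at *
    calc ‖w‖ ≤ ‖y‖ + ‖w - y‖ := norm_le_insert' w y
      _ < T + sc D d * d := by
          have h1 := cell_subset_ball hD hd hwy
          have h2 : ‖y‖ < T := hyball
          linarith

lemma ratio_aux (a b : ℝ) :
    Tendsto (fun T : ℝ => ((T + a) / (T + b)) ^ d) atTop (𝓝 1) := by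
  have h0 : Tendsto (fun T : ℝ => (a - b) * (T + b)⁻¹) atTop (𝓝 0) := by
    have h1 : Tendsto (fun T : ℝ => (T + b)⁻¹) atTop (𝓝 0) :=
      tendsto_inv_atTop_zero.comp (tendsto_atTop_add_const_right atTop b tendsto_id)
    simpa using h1.const_mul (a - b)
  have h2 : Tendsto (fun T : ℝ => 1 + (a - b) * (T + b)⁻¹) atTop (𝓝 1) := by
    have := (tendsto_const_nhds (x := (1:ℝ)) (f := atTop)).add h0
    simpa using this
  have h3 : Tendsto (fun T : ℝ => (T + a) / (T + b)) atTop (𝓝 1) := by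
    apply h2.congr'
    filter_upwards [eventually_gt_atTop (|b| + 1)] with T hT
    have hb : T + b > 0 := by
      have := neg_abs_le b; linarith
    field_simp
    ring
  have := h3.pow d
  simpa using this

lemma ratio_tendsto (hD : 0 < D) (hd : 1 ≤ d) {A : Set (EuclideanSpace ℝ (Fin d))}
    (hdens : ∀ ε > (0 : ℝ), ∃ T₀ : ℝ, ∀ T : ℝ, T₀ ≤ T → ∀ x : EuclideanSpace ℝ (Fin d),
      |((A ∩ Metric.ball x T).ncard : ℝ) / (volume (Metric.ball x T)).toReal - D| < ε)
    (c : ℝ) :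
    Tendsto (fun T : ℝ => ((A ∩ Metric.ball (0 : EuclideanSpace ℝ (Fin d)) (T + c)).ncard : ℝ) /
      ((lattice D ∩ Metric.ball (0 : EuclideanSpace ℝ (Fin d)) T).ncard : ℝ)) atTop (𝓝 1) := by
  set ρ : ℝ := sc D d * d with hρ
  have hsc := sc_pos (d := d) hD
  have hρ0 : 0 ≤ ρ := by positivity
  set va : ℝ → ℝ := fun t => (volume (Metric.ball (0 : EuclideanSpace ℝ (Fin d)) t)).toReal with hva
  set NA : ℝ → ℝ := fun t => ((A ∩ Metric.ball (0 : EuclideanSpace ℝ (Fin d)) t).ncard : ℝ) with hNA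
  set NL : ℝ → ℝ := fun T => ((lattice D ∩ Metric.ball (0 : EuclideanSpace ℝ (Fin d)) T).ncard : ℝ) with hNL
  set c1 : ℝ := (volume (Metric.ball (0 : EuclideanSpace ℝ (Fin d)) 1)).toReal with hc1
  have hball1_pos : (0 : ℝ≥0∞) < volume (Metric.ball (0 : EuclideanSpace ℝ (Fin d)) 1) :=
    Metric.measure_ball_pos volume 0 one_pos
  have hball1_ne_top : volume (Metric.ball (0 : EuclideanSpace ℝ (Fin d)) 1) ≠ ⊤ := measure_ball_lt_top.ne
  have hc1pos : 0 < c1 := ENNReal.toReal_pos hball1_pos.ne' hball1_ne_top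
  have hva_eq : ∀ t : ℝ, 0 ≤ t → va t = t ^ d * c1 := by
    intro t ht
    rw [hva]
    simp only
    rw [volume_ball_eq hd 0 ht, ENNReal.toReal_mul, ENNReal.toReal_ofReal (by positivity)]
  -- lattice count real bounds
  have hNL_bounds : ∀ T : ℝ, ρ + 1 ≤ T →
      (T - ρ) ^ d * c1 ≤ NL T * sc D d ^ d ∧ NL T * sc D d ^ d ≤ (T + ρ) ^ d * c1 := by
    intro T hT
    obtain ⟨hlo, hhi⟩ := lattice_count_bounds (hD := hD) hd T
    have hTρ : (0:ℝ) ≤ T - ρ := by linarith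
    have hTρ' : (0:ℝ) ≤ T + ρ := by linarith
    have hmul_ne_top : ((lattice D ∩ Metric.ball (0 : EuclideanSpace ℝ (Fin d)) T).ncard : ℝ≥0∞) *
        ENNReal.ofReal (sc D d ^ d) ≠ ⊤ := by
      exact ENNReal.mul_ne_top (ENNReal.natCast_ne_top _) ENNReal.ofReal_ne_top
    have htoReal : (((lattice D ∩ Metric.ball (0 : EuclideanSpace ℝ (Fin d)) T).ncard : ℝ≥0∞) *
        ENNReal.ofReal (sc D d ^ d)).toReal = NL T * sc D d ^ d := by
      rw [ENNReal.toReal_mul, ENNReal.toReal_ofReal (by positivity : (0:ℝ) ≤ sc D d ^ d)]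
      simp [hNL]
    constructor
    · have := ENNReal.toReal_mono hmul_ne_top hlo
      rwa [htoReal, volume_ball_eq hd 0 hTρ, ENNReal.toReal_mul,
        ENNReal.toReal_ofReal (by positivity)] at this
    · have hne : volume (Metric.ball (0 : EuclideanSpace ℝ (Fin d)) (T + ρ)) ≠ ⊤ := measure_ball_lt_top.ne
      have := ENNReal.toReal_mono hne hhi
      rwa [htoReal, volume_ball_eq hd 0 hTρ', ENNReal.toReal_mul,
        ENNReal.toReal_ofReal (by positivity)] at this
  have hNL_pos : ∀ T : ℝ, ρ + 1 ≤ T → 0 < NL T := by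
    intro T hT
    rw [hNL]
    simp only
    have hfin := lattice_finite hD (0 : EuclideanSpace ℝ (Fin d)) T
    have hne : (lattice D ∩ Metric.ball (0 : EuclideanSpace ℝ (Fin d)) T).Nonempty := by
      refine ⟨0, lattice_zero, ?_⟩
      rw [Metric.mem_ball, dist_self]
      linarith
    exact_mod_cast (Set.ncard_pos hfin).2 hne
  -- t1
  have t1 : Tendsto (fun T : ℝ => NA (T + c) / va (T + c)) atTop (𝓝 D) := by
    have base : Tendsto (fun T : ℝ => NA T / va T) atTop (𝓝 D) := by
      rw [Metric.tendsto_atTop]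
      intro ε hε
      obtain ⟨T₀, hT₀⟩ := hdens ε hε
      exact ⟨T₀, fun T hT => by rw [Real.dist_eq]; exact hT₀ T hT 0⟩
    exact base.comp (tendsto_atTop_add_const_right atTop c tendsto_id)
  -- t2
  have t2 : Tendsto (fun T : ℝ => va (T + c) / va T) atTop (𝓝 1) := by
    have h := ratio_aux (d := d) c 0
    apply h.congr'
    filter_upwards [eventually_gt_atTop (max 0 (-c) + 1)] with T hT
    have hT0 : (0:ℝ) < T := by
      have := le_max_left 0 (-c); linarith
    have hTc : (0:ℝ) ≤ T + c := by
      have := le_max_right 0 (-c); linarith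
    rw [hva_eq (T + c) hTc, hva_eq T hT0.le]
    rw [div_pow]
    rw [add_zero]
    field_simp
  -- t3
  have t3 : Tendsto (fun T : ℝ => va T / NL T) atTop (𝓝 (sc D d ^ d)) := by
    have hlow : Tendsto (fun T : ℝ => sc D d ^ d * ((T + 0) / (T + ρ)) ^ d) atTop
        (𝓝 (sc D d ^ d)) := by
      have := (ratio_aux (d := d) 0 ρ).const_mul (sc D d ^ d)
      simpa using this
    have hhigh : Tendsto (fun T : ℝ => sc D d ^ d * ((T + 0) / (T - ρ)) ^ d) atTop
        (𝓝 (sc D d ^ d)) := by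
      have h := (ratio_aux (d := d) 0 (-ρ)).const_mul (sc D d ^ d)
      simpa [sub_eq_add_neg] using h
    apply tendsto_of_tendsto_of_tendsto_of_le_of_le' hlow hhigh
    · filter_upwards [eventually_ge_atTop (ρ + 1)] with T hT
      obtain ⟨hlo, hhi⟩ := hNL_bounds T hT
      have hNLpos := hNL_pos T hT
      have hT0 : (0:ℝ) < T := by linarith
      rw [hva_eq T hT0.le, add_zero, div_pow]
      have hTρpos : (0:ℝ) < (T + ρ) ^ d := by positivity
      rw [le_div_iff₀ hNLpos]
      calc sc D d ^ d * (T ^ d / (T + ρ) ^ d) * NL T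
          = (NL T * sc D d ^ d) * (T ^ d / (T + ρ) ^ d) := by ring
        _ ≤ ((T + ρ) ^ d * c1) * (T ^ d / (T + ρ) ^ d) :=
            mul_le_mul_of_nonneg_right hhi (by positivity)
        _ = T ^ d * c1 := by field_simp
    · filter_upwards [eventually_ge_atTop (ρ + 1)] with T hT
      obtain ⟨hlo, hhi⟩ := hNL_bounds T hT
      have hNLpos := hNL_pos T hT
      have hT0 : (0:ℝ) < T := by linarith
      have hTρpos : (0:ℝ) < (T - ρ) ^ d := by
        have : (0:ℝ) < T - ρ := by linarith
        positivity
      rw [hva_eq T hT0.le, add_zero, div_pow]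
      rw [div_le_iff₀ hNLpos]
      calc T ^ d * c1 = ((T - ρ) ^ d * c1) * (T ^ d / (T - ρ) ^ d) := by
            field_simp
        _ ≤ (NL T * sc D d ^ d) * (T ^ d / (T - ρ) ^ d) :=
            mul_le_mul_of_nonneg_right hlo (by positivity)
        _ = sc D d ^ d * (T ^ d / (T - ρ) ^ d) * NL T := by ring
  -- combine
  have hprod : Tendsto (fun T : ℝ =>
      (NA (T + c) / va (T + c)) * (va (T + c) / va T) * (va T / NL T)) atTop
      (𝓝 (D * 1 * sc D d ^ d)) := (t1.mul t2).mul t3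
  have hone : D * 1 * sc D d ^ d = 1 := by
    rw [mul_one, sc_pow hD hd, mul_inv_cancel₀ hD.ne']
  rw [hone] at hprod
  apply hprod.congr'
  filter_upwards [eventually_gt_atTop (max (ρ + 1) (max 0 (-c) + 1))] with T hT
  have hT1 : ρ + 1 ≤ T := le_trans (le_max_left _ _) hT.le
  have hT2 : max 0 (-c) + 1 ≤ T := le_trans (le_max_right _ _) hT.le
  have hT0 : (0:ℝ) < T := by have := le_max_left 0 (-c); linarith
  have hTc : (0:ℝ) < T + c := by have := le_max_right 0 (-c); linarith
  have hva1 : va (T + c) ≠ 0 := by rw [hva_eq _ hTc.le]; positivity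
  have hva2 : va T ≠ 0 := by rw [hva_eq _ hT0.le]; positivity
  field_simp
  rfl

lemma hallA (hD : 0 < D) (hd : 1 ≤ d) {L : ℝ} (hL : 0 < L)
    {A : Set (EuclideanSpace ℝ (Fin d))}
    (hdisc : ∀ (x : EuclideanSpace ℝ (Fin d)) (r : ℝ), (A ∩ Metric.ball x r).Finite)
    (σ : (v : EuclideanSpace ℝ (Fin d)) → (A ≃ A))
    (hσ : ∀ (v : EuclideanSpace ℝ (Fin d)) (a : A),
      ‖(a : EuclideanSpace ℝ (Fin d)) + v - ((σ v) a : EuclideanSpace ℝ (Fin d))‖ < L)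
    (hdens : ∀ ε > (0 : ℝ), ∃ T₀ : ℝ, ∀ T : ℝ, T₀ ≤ T → ∀ x : EuclideanSpace ℝ (Fin d),
      |((A ∩ Metric.ball x T).ncard : ℝ) / (volume (Metric.ball x T)).toReal - D| < ε)
    (F : Finset (EuclideanSpace ℝ (Fin d))) (hFA : ↑F ⊆ A) :
    F.card ≤ (lattice D ∩ ⋃ a ∈ F, Metric.ball a (L + sc D d * d + 1)).ncard := by
  classical
  set ρ : ℝ := sc D d * d with hρdef
  have hsc := sc_pos (d := d) hD
  have hρ0 : 0 ≤ ρ := by positivity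
  set R : ℝ := L + ρ + 1 with hRdef
  obtain ⟨M0, hM0⟩ := (F.image (fun a => ‖a‖)).exists_le
  set M : ℝ := max M0 0 with hMdef
  have hM : ∀ a ∈ F, ‖a‖ ≤ M := fun a ha =>
    le_trans (hM0 _ (Finset.mem_image_of_mem _ ha)) (le_max_left _ _)
  have hMnn : (0:ℝ) ≤ M := le_max_right _ _
  set c : ℝ := M + L + 1 with hcdef
  -- the target set is finite
  have hQfinite : (lattice D ∩ ⋃ a ∈ F, Metric.ball a R).Finite := by
    apply Set.Finite.subset (lattice_finite hD 0 (M + R))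
    rintro y ⟨hy, hyb⟩
    rw [Set.mem_iUnion₂] at hyb
    obtain ⟨a, haF, hya⟩ := hyb
    refine ⟨hy, ?_⟩
    rw [Metric.mem_ball, dist_zero_right]
    have h1 : dist y a < R := hya
    rw [dist_eq_norm] at h1
    calc ‖y‖ ≤ ‖a‖ + ‖y - a‖ := norm_le_insert' y a
      _ < M + R := by have := hM a haF; linarith
  set Qfin : Finset (EuclideanSpace ℝ (Fin d)) := hQfinite.toFinset with hQfin
  have hQcard : (lattice D ∩ ⋃ a ∈ F, Metric.ball a R).ncard = Qfin.card :=
    Set.ncard_eq_toFinset_card _ hQfinite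
  -- key counting inequality for every T ≥ 1
  have key : ∀ T : ℝ, 1 ≤ T →
      F.card * (lattice D ∩ Metric.ball (0 : EuclideanSpace ℝ (Fin d)) T).ncard ≤
      Qfin.card * (A ∩ Metric.ball (0 : EuclideanSpace ℝ (Fin d)) (T + c)).ncard := by
    intro T hT
    set Vfin := (lattice_finite hD (0 : EuclideanSpace ℝ (Fin d)) T).toFinset with hVfin
    set BigA := (hdisc (0 : EuclideanSpace ℝ (Fin d)) (T + c)).toFinset with hBigA
    set P : EuclideanSpace ℝ (Fin d) → EuclideanSpace ℝ (Fin d) → Prop :=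
      fun v a => ∃ f ∈ F, a ∈ Metric.ball (f + v) L with hP
    have step1 : ∀ v ∈ Vfin, F.card ≤ (BigA.filter (fun a => P v a)).card := by
      intro v hv
      rw [hVfin, Set.Finite.mem_toFinset] at hv
      obtain ⟨hvlat, hvball⟩ := hv
      rw [Metric.mem_ball, dist_zero_right] at hvball
      set φ : EuclideanSpace ℝ (Fin d) → EuclideanSpace ℝ (Fin d) :=
        fun a => if h : a ∈ A then ((σ v) ⟨a, h⟩ : EuclideanSpace ℝ (Fin d)) else a with hφ
      apply Finset.card_le_card_of_injOn φ
      · intro a haF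
        have haA : a ∈ A := hFA haF
        have hφa : φ a = ((σ v) ⟨a, haA⟩ : EuclideanSpace ℝ (Fin d)) := dif_pos haA
        have hnear := hσ v ⟨a, haA⟩
        rw [Finset.mem_coe, Finset.mem_filter]
        constructor
        · rw [hBigA, Set.Finite.mem_toFinset]
          refine ⟨by rw [hφa]; exact Subtype.mem _, ?_⟩
          rw [Metric.mem_ball, dist_zero_right, hφa]
          have h1 : ‖((σ v) ⟨a, haA⟩ : EuclideanSpace ℝ (Fin d))‖ ≤ ‖a + v‖ + L := by
            have h2 : ‖a + v - ((σ v) ⟨a, haA⟩ : EuclideanSpace ℝ (Fin d))‖ < L := hnear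
            calc ‖((σ v) ⟨a, haA⟩ : EuclideanSpace ℝ (Fin d))‖
                = ‖(a + v) - (a + v - ((σ v) ⟨a, haA⟩ : EuclideanSpace ℝ (Fin d)))‖ := by
                  congr 1; abel
              _ ≤ ‖a + v‖ + ‖a + v - ((σ v) ⟨a, haA⟩ : EuclideanSpace ℝ (Fin d))‖ :=
                  norm_sub_le _ _
              _ ≤ ‖a + v‖ + L := by linarith
          have h3 : ‖a + v‖ ≤ ‖a‖ + ‖v‖ := norm_add_le _ _
          have h4 := hM a haF
          linarith
        · refine ⟨a, haF, ?_⟩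
          rw [Metric.mem_ball, dist_eq_norm, hφa, ← norm_sub_rev]
          exact hσ v ⟨a, haA⟩
      · intro a haF a' haF' heq
        have haA : a ∈ A := hFA (by exact_mod_cast haF)
        have haA' : a' ∈ A := hFA (by exact_mod_cast haF')
        simp only [hφ] at heq
        rw [dif_pos haA, dif_pos haA'] at heq
        have := (σ v).injective (Subtype.ext heq)
        exact congrArg Subtype.val this
    have step2 : ∀ a ∈ BigA, (Vfin.filter (fun v => P v a)).card ≤ Qfin.card := by
      intro a _
      apply Finset.card_le_card_of_injOn (fun v => rnd D a - v)
      · intro v hv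
        simp only [Finset.mem_coe, Finset.mem_filter] at hv
        obtain ⟨hvV, f, hfF, hball⟩ := hv
        rw [hVfin, Set.Finite.mem_toFinset] at hvV
        rw [hQfin, Finset.mem_coe, Set.Finite.mem_toFinset]
        refine ⟨lattice_sub (rnd_mem a) hvV.1, ?_⟩
        rw [Set.mem_iUnion₂]
        refine ⟨f, hfF, ?_⟩
        rw [Metric.mem_ball, dist_eq_norm]
        have h1 : ‖a - rnd D a‖ ≤ ρ := norm_sub_rnd hD hd a
        have h2 : ‖a - (f + v)‖ < L := by
          rw [Metric.mem_ball, dist_eq_norm] at hball; exact hball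
        calc ‖rnd D a - v - f‖ = ‖(a - (f + v)) - (a - rnd D a)‖ := by congr 1; abel
          _ ≤ ‖a - (f + v)‖ + ‖a - rnd D a‖ := norm_sub_le _ _
          _ < L + ρ := by linarith
          _ < R := by rw [hRdef]; linarith
      · intro v _ v' _ heq
        exact sub_right_injective heq
    -- double counting
    have swap : ∑ v ∈ Vfin, (BigA.filter (fun a => P v a)).card =
        ∑ a ∈ BigA, (Vfin.filter (fun v => P v a)).card := by
      simp only [Finset.card_filter]
      rw [Finset.sum_comm]
    calc F.card * (lattice D ∩ Metric.ball (0 : EuclideanSpace ℝ (Fin d)) T).ncard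
        = Vfin.card * F.card := by
          rw [Set.ncard_eq_toFinset_card _ (lattice_finite hD 0 T)]
          rw [hVfin, Nat.mul_comm]
      _ = ∑ _v ∈ Vfin, F.card := by rw [Finset.sum_const, smul_eq_mul]
      _ ≤ ∑ v ∈ Vfin, (BigA.filter (fun a => P v a)).card := Finset.sum_le_sum step1
      _ = ∑ a ∈ BigA, (Vfin.filter (fun v => P v a)).card := swap
      _ ≤ ∑ _a ∈ BigA, Qfin.card := Finset.sum_le_sum step2
      _ = BigA.card * Qfin.card := by rw [Finset.sum_const, smul_eq_mul]
      _ = Qfin.card * (A ∩ Metric.ball (0 : EuclideanSpace ℝ (Fin d)) (T + c)).ncard := by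
          rw [Set.ncard_eq_toFinset_card _ (hdisc 0 (T + c)), hBigA, Nat.mul_comm]
  -- pass to the limit
  rw [hQcard]
  have htend : Tendsto (fun T : ℝ => (Qfin.card : ℝ) *
      (((A ∩ Metric.ball (0 : EuclideanSpace ℝ (Fin d)) (T + c)).ncard : ℝ) /
        ((lattice D ∩ Metric.ball (0 : EuclideanSpace ℝ (Fin d)) T).ncard : ℝ)))
      atTop (𝓝 ((Qfin.card : ℝ) * 1)) :=
    (ratio_tendsto hD hd hdens c).const_mul _
  have hev : ∀ᶠ T : ℝ in atTop, (F.card : ℝ) ≤ (Qfin.card : ℝ) *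
      (((A ∩ Metric.ball (0 : EuclideanSpace ℝ (Fin d)) (T + c)).ncard : ℝ) /
        ((lattice D ∩ Metric.ball (0 : EuclideanSpace ℝ (Fin d)) T).ncard : ℝ)) := by
    filter_upwards [eventually_ge_atTop (max 1 (ρ + 1))] with T hT
    have hT1 : (1:ℝ) ≤ T := le_trans (le_max_left _ _) hT
    have hT2 : ρ + 1 ≤ T := le_trans (le_max_right _ _) hT
    have hNLpos : (0:ℝ) < ((lattice D ∩ Metric.ball (0 : EuclideanSpace ℝ (Fin d)) T).ncard : ℝ) := by
      have hfin := lattice_finite hD (0 : EuclideanSpace ℝ (Fin d)) T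
      have hne : (lattice D ∩ Metric.ball (0 : EuclideanSpace ℝ (Fin d)) T).Nonempty := by
        refine ⟨0, lattice_zero, ?_⟩
        rw [Metric.mem_ball, dist_self]; linarith
      exact_mod_cast (Set.ncard_pos hfin).2 hne
    rw [mul_div_assoc', le_div_iff₀ hNLpos]
    have := key T hT1
    calc (F.card : ℝ) * ((lattice D ∩ Metric.ball (0 : EuclideanSpace ℝ (Fin d)) T).ncard : ℝ)
        = ((F.card * (lattice D ∩ Metric.ball (0 : EuclideanSpace ℝ (Fin d)) T).ncard : ℕ) : ℝ) := by
          push_cast; ring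
      _ ≤ ((Qfin.card * (A ∩ Metric.ball (0 : EuclideanSpace ℝ (Fin d)) (T + c)).ncard : ℕ) : ℝ) := by
          exact_mod_cast this
      _ = (Qfin.card : ℝ) * ((A ∩ Metric.ball (0 : EuclideanSpace ℝ (Fin d)) (T + c)).ncard : ℝ) := by
          push_cast; ring
  have hfinal : (F.card : ℝ) ≤ (Qfin.card : ℝ) * 1 := ge_of_tendsto htend hev
  rw [mul_one] at hfinal
  exact_mod_cast hfinal

lemma hallL (hD : 0 < D) (hd : 1 ≤ d) {L : ℝ} (hL : 0 < L)
    {A : Set (EuclideanSpace ℝ (Fin d))}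
    (hdisc : ∀ (x : EuclideanSpace ℝ (Fin d)) (r : ℝ), (A ∩ Metric.ball x r).Finite)
    (σ : (v : EuclideanSpace ℝ (Fin d)) → (A ≃ A))
    (hσ : ∀ (v : EuclideanSpace ℝ (Fin d)) (a : A),
      ‖(a : EuclideanSpace ℝ (Fin d)) + v - ((σ v) a : EuclideanSpace ℝ (Fin d))‖ < L)
    (hdens : ∀ ε > (0 : ℝ), ∃ T₀ : ℝ, ∀ T : ℝ, T₀ ≤ T → ∀ x : EuclideanSpace ℝ (Fin d),
      |((A ∩ Metric.ball x T).ncard : ℝ) / (volume (Metric.ball x T)).toReal - D| < ε)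
    (G : Finset (EuclideanSpace ℝ (Fin d)))
    (hG : ↑G ⊆ (lattice D : Set (EuclideanSpace ℝ (Fin d)))) :
    G.card ≤ (A ∩ ⋃ y ∈ G, Metric.ball y (L + sc D d * d + 1)).ncard := by
  classical
  set ρ : ℝ := sc D d * d with hρdef
  have hsc := sc_pos (d := d) hD
  have hρ0 : 0 ≤ ρ := by positivity
  set R : ℝ := L + ρ + 1 with hRdef
  obtain ⟨M0, hM0⟩ := (G.image (fun y => ‖y‖)).exists_le
  set M : ℝ := max M0 0 with hMdef
  have hM : ∀ y ∈ G, ‖y‖ ≤ M := fun y hy =>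
    le_trans (hM0 _ (Finset.mem_image_of_mem _ hy)) (le_max_left _ _)
  have hMnn : (0:ℝ) ≤ M := le_max_right _ _
  set c : ℝ := M + ρ + 1 with hcdef
  -- the target set is finite
  have hPfinite : (A ∩ ⋃ y ∈ G, Metric.ball y R).Finite := by
    apply Set.Finite.subset (hdisc 0 (M + R))
    rintro a ⟨ha, hab⟩
    rw [Set.mem_iUnion₂] at hab
    obtain ⟨y, hyG, hay⟩ := hab
    refine ⟨ha, ?_⟩
    rw [Metric.mem_ball, dist_zero_right]
    have h1 : dist a y < R := hay
    rw [dist_eq_norm] at h1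
    calc ‖a‖ ≤ ‖y‖ + ‖a - y‖ := norm_le_insert' a y
      _ < M + R := by have := hM y hyG; linarith
  set Pfin : Finset (EuclideanSpace ℝ (Fin d)) := hPfinite.toFinset with hPfin
  have hPcard : (A ∩ ⋃ y ∈ G, Metric.ball y R).ncard = Pfin.card :=
    Set.ncard_eq_toFinset_card _ hPfinite
  -- key counting inequality for every T ≥ 1
  have key : ∀ T : ℝ, 1 ≤ T →
      G.card * (A ∩ Metric.ball (0 : EuclideanSpace ℝ (Fin d)) (T + -c)).ncard ≤
      Pfin.card * (lattice D ∩ Metric.ball (0 : EuclideanSpace ℝ (Fin d)) T).ncard := by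
    intro T hT
    set Vfin := (lattice_finite hD (0 : EuclideanSpace ℝ (Fin d)) T).toFinset with hVfin
    set BigA := (hdisc (0 : EuclideanSpace ℝ (Fin d)) (T + c)).toFinset with hBigA
    set SmallA := (hdisc (0 : EuclideanSpace ℝ (Fin d)) (T + -c)).toFinset with hSmallA
    set P : EuclideanSpace ℝ (Fin d) → EuclideanSpace ℝ (Fin d) → Prop :=
      fun v a => ∃ y ∈ G, dist (a + v) y < ρ + 1 with hP
    have hSB : SmallA ⊆ BigA := by
      intro a ha
      rw [hSmallA, Set.Finite.mem_toFinset] at ha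
      rw [hBigA, Set.Finite.mem_toFinset]
      refine ⟨ha.1, ?_⟩
      have := ha.2
      rw [Metric.mem_ball] at *
      have hc0 : (0:ℝ) ≤ c := by rw [hcdef]; linarith
      linarith
    have step1 : ∀ v ∈ Vfin, (BigA.filter (fun a => P v a)).card ≤ Pfin.card := by
      intro v hv
      rw [hVfin, Set.Finite.mem_toFinset] at hv
      obtain ⟨hvlat, hvball⟩ := hv
      set φ : EuclideanSpace ℝ (Fin d) → EuclideanSpace ℝ (Fin d) :=
        fun a => if h : a ∈ A then ((σ v) ⟨a, h⟩ : EuclideanSpace ℝ (Fin d)) else a with hφ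
      apply Finset.card_le_card_of_injOn φ
      · intro a ha
        simp only [Finset.mem_coe, Finset.mem_filter] at ha
        obtain ⟨haBig, y, hyG, hdist⟩ := ha
        rw [hBigA, Set.Finite.mem_toFinset] at haBig
        have haA : a ∈ A := haBig.1
        have hφa : φ a = ((σ v) ⟨a, haA⟩ : EuclideanSpace ℝ (Fin d)) := dif_pos haA
        have hnear := hσ v ⟨a, haA⟩
        rw [hPfin, Finset.mem_coe, Set.Finite.mem_toFinset]
        refine ⟨by rw [hφa]; exact Subtype.mem _, ?_⟩
        rw [Set.mem_iUnion₂]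
        refine ⟨y, hyG, ?_⟩
        rw [Metric.mem_ball, dist_eq_norm, hφa]
        have h2 : ‖a + v - y‖ < ρ + 1 := by rwa [dist_eq_norm] at hdist
        calc ‖((σ v) ⟨a, haA⟩ : EuclideanSpace ℝ (Fin d)) - y‖
            = ‖(a + v - y) - (a + v - ((σ v) ⟨a, haA⟩ : EuclideanSpace ℝ (Fin d)))‖ := by
              congr 1; abel
          _ ≤ ‖a + v - y‖ + ‖a + v - ((σ v) ⟨a, haA⟩ : EuclideanSpace ℝ (Fin d))‖ :=
              norm_sub_le _ _
          _ < (ρ + 1) + L := by linarith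
          _ = R := by rw [hRdef]; ring
      · intro a ha a' ha' heq
        simp only [Finset.mem_coe, Finset.mem_filter] at ha ha'
        have haA : a ∈ A := by
          have := ha.1; rw [hBigA, Set.Finite.mem_toFinset] at this; exact this.1
        have haA' : a' ∈ A := by
          have := ha'.1; rw [hBigA, Set.Finite.mem_toFinset] at this; exact this.1
        simp only [hφ] at heq
        rw [dif_pos haA, dif_pos haA'] at heq
        have := (σ v).injective (Subtype.ext heq)
        exact congrArg Subtype.val this
    have step2 : ∀ a ∈ SmallA, G.card ≤ (Vfin.filter (fun v => P v a)).card := by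
      intro a ha
      rw [hSmallA, Set.Finite.mem_toFinset] at ha
      obtain ⟨haA, haball⟩ := ha
      rw [Metric.mem_ball, dist_zero_right] at haball
      apply Finset.card_le_card_of_injOn (fun y => y - rnd D a)
      · intro y hyG
        have hyG' : y ∈ G := by exact_mod_cast hyG
        rw [Finset.mem_coe, Finset.mem_filter]
        have hrnd : ‖a - rnd D a‖ ≤ ρ := norm_sub_rnd hD hd a
        constructor
        · rw [hVfin, Set.Finite.mem_toFinset]
          refine ⟨lattice_sub (hG hyG) (rnd_mem a), ?_⟩
          rw [Metric.mem_ball, dist_zero_right]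
          calc ‖y - rnd D a‖ = ‖y - a + (a - rnd D a)‖ := by congr 1; abel
            _ ≤ ‖y - a‖ + ‖a - rnd D a‖ := norm_add_le _ _
            _ ≤ (‖y‖ + ‖a‖) + ρ := by
                have := norm_sub_le y a
                have h3 := hM y hyG'
                linarith [norm_sub_le y a]
            _ < M + (T + -c) + ρ := by
                have h3 := hM y hyG'
                have : ‖y - a‖ ≤ ‖y‖ + ‖a‖ := norm_sub_le y a
                linarith
            _ = T - 1 := by rw [hcdef]; ring
            _ < T := by linarith
        · refine ⟨y, hyG', ?_⟩
          rw [dist_eq_norm]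
          calc ‖a + (y - rnd D a) - y‖ = ‖a - rnd D a‖ := by congr 1; abel
            _ ≤ ρ := hrnd
            _ < ρ + 1 := by linarith
      · intro y _ y' _ heq
        exact sub_left_injective heq
    -- double counting
    have swap : ∑ v ∈ Vfin, (BigA.filter (fun a => P v a)).card =
        ∑ a ∈ BigA, (Vfin.filter (fun v => P v a)).card := by
      simp only [Finset.card_filter]
      rw [Finset.sum_comm]
    calc G.card * (A ∩ Metric.ball (0 : EuclideanSpace ℝ (Fin d)) (T + -c)).ncard
        = ∑ _a ∈ SmallA, G.card := by
          rw [Finset.sum_const, smul_eq_mul, Set.ncard_eq_toFinset_card _ (hdisc 0 (T + -c))]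
          rw [hSmallA, Nat.mul_comm]
      _ ≤ ∑ a ∈ SmallA, (Vfin.filter (fun v => P v a)).card := Finset.sum_le_sum step2
      _ ≤ ∑ a ∈ BigA, (Vfin.filter (fun v => P v a)).card :=
          Finset.sum_le_sum_of_subset hSB
      _ = ∑ v ∈ Vfin, (BigA.filter (fun a => P v a)).card := swap.symm
      _ ≤ ∑ _v ∈ Vfin, Pfin.card := Finset.sum_le_sum step1
      _ = Vfin.card * Pfin.card := by rw [Finset.sum_const, smul_eq_mul]
      _ = Pfin.card * (lattice D ∩ Metric.ball (0 : EuclideanSpace ℝ (Fin d)) T).ncard := by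
          rw [Set.ncard_eq_toFinset_card _ (lattice_finite hD 0 T), hVfin, Nat.mul_comm]
  -- pass to the limit
  rw [hPcard]
  have htend : Tendsto (fun T : ℝ =>
      (((A ∩ Metric.ball (0 : EuclideanSpace ℝ (Fin d)) (T + -c)).ncard : ℝ) /
        ((lattice D ∩ Metric.ball (0 : EuclideanSpace ℝ (Fin d)) T).ncard : ℝ)) * (G.card : ℝ))
      atTop (𝓝 (1 * (G.card : ℝ))) :=
    (ratio_tendsto hD hd hdens (-c)).mul_const _
  have hev : ∀ᶠ T : ℝ in atTop,
      (((A ∩ Metric.ball (0 : EuclideanSpace ℝ (Fin d)) (T + -c)).ncard : ℝ) /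
        ((lattice D ∩ Metric.ball (0 : EuclideanSpace ℝ (Fin d)) T).ncard : ℝ)) * (G.card : ℝ)
        ≤ (Pfin.card : ℝ) := by
    filter_upwards [eventually_ge_atTop (max 1 (ρ + 1))] with T hT
    have hT1 : (1:ℝ) ≤ T := le_trans (le_max_left _ _) hT
    have hT2 : ρ + 1 ≤ T := le_trans (le_max_right _ _) hT
    have hNLpos : (0:ℝ) < ((lattice D ∩ Metric.ball (0 : EuclideanSpace ℝ (Fin d)) T).ncard : ℝ) := by
      have hfin := lattice_finite hD (0 : EuclideanSpace ℝ (Fin d)) T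
      have hne : (lattice D ∩ Metric.ball (0 : EuclideanSpace ℝ (Fin d)) T).Nonempty := by
        refine ⟨0, lattice_zero, ?_⟩
        rw [Metric.mem_ball, dist_self]; linarith
      exact_mod_cast (Set.ncard_pos hfin).2 hne
    rw [div_mul_eq_mul_div, div_le_iff₀ hNLpos]
    have := key T hT1
    calc ((A ∩ Metric.ball (0 : EuclideanSpace ℝ (Fin d)) (T + -c)).ncard : ℝ) * (G.card : ℝ)
        = ((G.card * (A ∩ Metric.ball (0 : EuclideanSpace ℝ (Fin d)) (T + -c)).ncard : ℕ) : ℝ) := by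
          push_cast; ring
      _ ≤ ((Pfin.card * (lattice D ∩ Metric.ball (0 : EuclideanSpace ℝ (Fin d)) T).ncard : ℕ) : ℝ) := by
          exact_mod_cast this
      _ = (Pfin.card : ℝ) * ((lattice D ∩ Metric.ball (0 : EuclideanSpace ℝ (Fin d)) T).ncard : ℝ) := by
          push_cast; ring
  have hfinal : 1 * (G.card : ℝ) ≤ (Pfin.card : ℝ) := le_of_tendsto htend hev
  rw [one_mul] at hfinal
  exact_mod_cast hfinal

lemma subtype_nbr_finite {S : Set (EuclideanSpace ℝ (Fin d))}
    (hS : ∀ (x : EuclideanSpace ℝ (Fin d)) (r : ℝ), (S ∩ Metric.ball x r).Finite)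
    (a : EuclideanSpace ℝ (Fin d)) (r : ℝ) :
    {b : S | (b : EuclideanSpace ℝ (Fin d)) ∈ Metric.ball a r}.Finite := by
  have h1 : {b : S | (b : EuclideanSpace ℝ (Fin d)) ∈ Metric.ball a r} =
      Subtype.val ⁻¹' (S ∩ Metric.ball a r) := by
    ext b
    simp [b.2]
  rw [h1]
  exact Set.Finite.preimage Subtype.val_injective.injOn (hS a r)

end Aux

theorem stmt9 {d : ℕ} (A : Set (EuclideanSpace ℝ (Fin d))) (L D : ℝ) (hD : 0 < D)
    (hdisc : IsDiscreteSet A) (hA : RSI A L)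
    (hdens : ∀ ε > (0 : ℝ), ∃ T₀ : ℝ, ∀ T : ℝ, T₀ ≤ T → ∀ x : EuclideanSpace ℝ (Fin d),
      |((A ∩ Metric.ball x T).ncard : ℝ) / (volume (Metric.ball x T)).toReal - D| < ε) :
    ∃ C : ℝ, ∃ Θ : A ≃ (lattice D : Set (EuclideanSpace ℝ (Fin d))),
      ∀ a : A, ‖(a : EuclideanSpace ℝ (Fin d)) - (Θ a : EuclideanSpace ℝ (Fin d))‖ < C := by
  classical
  -- A is nonempty
  have hAne : A.Nonempty := by
    by_contra h
    rw [Set.not_nonempty_iff_eq_empty] at h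
    obtain ⟨T₀, hT₀⟩ := hdens (D / 2) (by linarith)
    have h2 := hT₀ (max T₀ 1) (le_max_left _ _) 0
    rw [h] at h2
    rw [Set.empty_inter] at h2
    simp only [Set.ncard_empty, Nat.cast_zero, zero_div, zero_sub, abs_neg,
      abs_of_pos hD] at h2
    linarith
  obtain ⟨a₀, ha₀⟩ := hAne
  rcases Nat.eq_zero_or_pos d with hd0 | hdpos
  · -- degenerate case d = 0
    subst hd0
    have hsub : ∀ x y : EuclideanSpace ℝ (Fin 0), x = y := by
      intro x y
      apply PiLp.ext
      intro j
      exact Fin.elim0 j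
    have hAll : A = (lattice D : Set (EuclideanSpace ℝ (Fin 0))) := by
      ext x
      constructor
      · intro _
        intro j
        exact Fin.elim0 j
      · intro _
        rw [hsub x a₀]
        exact ha₀
    refine ⟨1, Equiv.setCongr hAll, fun a => ?_⟩
    have : (a : EuclideanSpace ℝ (Fin 0)) = ((Equiv.setCongr hAll a : (lattice D : Set (EuclideanSpace ℝ (Fin 0)))) : EuclideanSpace ℝ (Fin 0)) := hsub _ _
    rw [← this, sub_self, norm_zero]
    exact one_pos
  · -- main case d ≥ 1
    have hd : 1 ≤ d := hdpos
    have hL : 0 < L := by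
      obtain ⟨σ0, hσ0⟩ := hA 0
      exact lt_of_le_of_lt (norm_nonneg _) (hσ0 ⟨a₀, ha₀⟩)
    set σ : (v : EuclideanSpace ℝ (Fin d)) → (A ≃ A) := fun v => (hA v).choose with hσdef
    have hσ : ∀ (v : EuclideanSpace ℝ (Fin d)) (a : A),
        ‖(a : EuclideanSpace ℝ (Fin d)) + v - ((σ v) a : EuclideanSpace ℝ (Fin d))‖ < L :=
      fun v => (hA v).choose_spec
    set R : ℝ := L + Aux.sc D d * d + 1 with hRdef
    haveI hLatNe : Nonempty (lattice D : Set (EuclideanSpace ℝ (Fin d))) :=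
      ⟨⟨0, Aux.lattice_zero⟩⟩
    haveI hANe : Nonempty A := ⟨⟨a₀, ha₀⟩⟩
    have hlatfin : ∀ (x : EuclideanSpace ℝ (Fin d)) (r : ℝ),
        ((lattice D : Set (EuclideanSpace ℝ (Fin d))) ∩ Metric.ball x r).Finite :=
      fun x r => Aux.lattice_finite hD x r
    -- neighbour maps
    set t : A → Finset (lattice D : Set (EuclideanSpace ℝ (Fin d))) :=
      fun a => (Aux.subtype_nbr_finite hlatfin (a : EuclideanSpace ℝ (Fin d)) R).toFinset with ht
    set t' : ↥(lattice D : Set (EuclideanSpace ℝ (Fin d))) → Finset A :=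
      fun y => (Aux.subtype_nbr_finite hdisc (y : EuclideanSpace ℝ (Fin d)) R).toFinset with ht'
    -- Hall condition 1
    have hall1 : ∀ s : Finset A, s.card ≤ (s.biUnion t).card := by
      intro s
      set F : Finset (EuclideanSpace ℝ (Fin d)) := s.image Subtype.val with hF
      have hFcard : F.card = s.card := Finset.card_image_of_injective s Subtype.val_injective
      have hFA : ↑F ⊆ A := by
        intro x hx
        rw [hF] at hx
        simp only [Finset.coe_image, Set.mem_image, Finset.mem_coe] at hx
        obtain ⟨b, _, rfl⟩ := hx
        exact b.2
      have h1 := Aux.hallA hD hd hL hdisc σ hσ hdens F hFA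
      have hWfin : ((lattice D : Set (EuclideanSpace ℝ (Fin d))) ∩
          ⋃ a ∈ F, Metric.ball a R).Finite := by
        apply Set.Finite.subset (Set.Finite.biUnion F.finite_toSet
          (fun a _ => Aux.lattice_finite hD a R))
        rintro w ⟨hw, hwU⟩
        rw [Set.mem_iUnion₂] at hwU
        obtain ⟨a, ha, hball⟩ := hwU
        exact Set.mem_biUnion ha ⟨hw, hball⟩
      have h2 : ((lattice D : Set (EuclideanSpace ℝ (Fin d))) ∩
          ⋃ a ∈ F, Metric.ball a R).ncard ≤ (s.biUnion t).card := by
        rw [Set.ncard_eq_toFinset_card _ hWfin]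
        apply Finset.card_le_card_of_injOn
          (fun w => if h : w ∈ (lattice D : Set (EuclideanSpace ℝ (Fin d))) then
            (⟨w, h⟩ : (lattice D : Set (EuclideanSpace ℝ (Fin d)))) else Classical.arbitrary _)
        · intro w hw
          simp only [Finset.mem_coe, Set.Finite.mem_toFinset] at hw
          obtain ⟨hwlat, hwU⟩ := hw
          simp only [Finset.mem_coe, dif_pos hwlat]
          rw [Set.mem_iUnion₂] at hwU
          obtain ⟨a, haF, hball⟩ := hwU
          rw [hF] at haF
          rw [Finset.mem_image] at haF
          obtain ⟨b, hbs, rfl⟩ := haF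
          apply Finset.mem_biUnion.2
          refine ⟨b, hbs, ?_⟩
          rw [ht, Set.Finite.mem_toFinset]
          exact hball
        · intro w hw w' hw' heq
          simp only [Finset.mem_coe, Set.Finite.mem_toFinset] at hw hw'
          simp only [dif_pos hw.1, dif_pos hw'.1] at heq
          exact congrArg Subtype.val heq
      calc s.card = F.card := hFcard.symm
        _ ≤ _ := h1
        _ ≤ (s.biUnion t).card := h2
    -- Hall condition 2
    have hall2 : ∀ s : Finset (lattice D : Set (EuclideanSpace ℝ (Fin d))),
        s.card ≤ (s.biUnion t').card := by
      intro s
      set G : Finset (EuclideanSpace ℝ (Fin d)) := s.image Subtype.val with hG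
      have hGcard : G.card = s.card := Finset.card_image_of_injective s Subtype.val_injective
      have hGL : ↑G ⊆ (lattice D : Set (EuclideanSpace ℝ (Fin d))) := by
        intro x hx
        rw [hG] at hx
        simp only [Finset.coe_image, Set.mem_image, Finset.mem_coe] at hx
        obtain ⟨b, _, rfl⟩ := hx
        exact b.2
      have h1 := Aux.hallL hD hd hL hdisc σ hσ hdens G hGL
      have hWfin : (A ∩ ⋃ y ∈ G, Metric.ball y R).Finite := by
        apply Set.Finite.subset (Set.Finite.biUnion G.finite_toSet
          (fun y _ => hdisc y R))
        rintro w ⟨hw, hwU⟩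
        rw [Set.mem_iUnion₂] at hwU
        obtain ⟨y, hy, hball⟩ := hwU
        exact Set.mem_biUnion hy ⟨hw, hball⟩
      have h2 : (A ∩ ⋃ y ∈ G, Metric.ball y R).ncard ≤ (s.biUnion t').card := by
        rw [Set.ncard_eq_toFinset_card _ hWfin]
        apply Finset.card_le_card_of_injOn
          (fun w => if h : w ∈ A then (⟨w, h⟩ : A) else Classical.arbitrary _)
        · intro w hw
          simp only [Finset.mem_coe, Set.Finite.mem_toFinset] at hw
          obtain ⟨hwA, hwU⟩ := hw
          simp only [Finset.mem_coe, dif_pos hwA]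
          rw [Set.mem_iUnion₂] at hwU
          obtain ⟨y, hyG, hball⟩ := hwU
          rw [hG] at hyG
          rw [Finset.mem_image] at hyG
          obtain ⟨b, hbs, rfl⟩ := hyG
          apply Finset.mem_biUnion.2
          refine ⟨b, hbs, ?_⟩
          rw [ht', Set.Finite.mem_toFinset]
          exact hball
        · intro w hw w' hw' heq
          simp only [Finset.mem_coe, Set.Finite.mem_toFinset] at hw hw'
          simp only [dif_pos hw.1, dif_pos hw'.1] at heq
          exact congrArg Subtype.val heq
      calc s.card = G.card := hGcard.symm
        _ ≤ _ := h1
        _ ≤ (s.biUnion t').card := h2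
    obtain ⟨f, hfinj, hf⟩ := (Finset.all_card_le_biUnion_card_iff_exists_injective t).1 hall1
    obtain ⟨g, hginj, hg⟩ := (Finset.all_card_le_biUnion_card_iff_exists_injective t').1 hall2
    obtain ⟨Θ, hΘ⟩ := sb_local hfinj hginj
    refine ⟨R + 1, Θ, fun a => ?_⟩
    rcases hΘ a with hcase | hcase
    · have := hf a
      rw [ht, Set.Finite.mem_toFinset] at this
      rw [hcase]
      have hdist : dist ((f a : (lattice D : Set (EuclideanSpace ℝ (Fin d)))) :
          EuclideanSpace ℝ (Fin d)) (a : EuclideanSpace ℝ (Fin d)) < R := this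
      rw [dist_comm, dist_eq_norm] at hdist
      linarith
    · have := hg (Θ a)
      rw [ht', Set.Finite.mem_toFinset] at this
      have hdist : dist ((g (Θ a) : A) : EuclideanSpace ℝ (Fin d))
          ((Θ a : (lattice D : Set (EuclideanSpace ℝ (Fin d)))) :
            EuclideanSpace ℝ (Fin d)) < R := this
      rw [hcase] at hdist
      rw [dist_eq_norm] at hdist
      linarith
end
end
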